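/- With notation as in the context, in the two-variable power series ring B[[X₁,X₂]] one has e(X₁) · (e∘g) = e(X₂), where e∘g denotes the power series obtained by substituting g := (1+a·X₁)^{−1}·(X₂ − X₁) for the variable of e. -/

import Mathlib

open scoped Classical

/-- `e = (1+aX)^{y/a} := Σ_{n≥0} (∏_{i=0}^{n-1}(y - i·a)) · Xⁿ/n!` in `B[[X]]`. -/
noncomputable def eSer {B : Type*} [CommRing B] [Algebra ℚ B] (y a : B) : PowerSeries B :=
  PowerSeries.mk fun n => ((n.factorial : ℚ)⁻¹) • ∏ i ∈ Finset.range n, (y - (i : B) * a)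

/-- Substitution of a two-variable power series `g` (with zero constant coefficient) into a
one-variable power series `f`: the coefficient of `f ∘ g` at a monomial `d` is the (finite) sum
`Σ_{n ≤ |d|} f_n · coeff_d (gⁿ)`, which is the full sum `Σ_n f_n · coeff_d (gⁿ)` since `gⁿ` has
no monomials of total degree `< n` when `g` has zero constant coefficient. -/
noncomputable def substPS {B : Type*} [CommRing B] (f : PowerSeries B)
    (g : MvPowerSeries (Fin 2) B) : MvPowerSeries (Fin 2) B :=
  fun d => ∑ n ∈ Finset.range (d.sum (fun _ k => k) + 1),
    (PowerSeries.coeff n f) * MvPowerSeries.coeff d (g ^ n)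

namespace S3proof
open MvPowerSeries Finset

variable {B : Type*} [CommRing B]

/-- total degree of an exponent -/
def deg (d : Fin 2 →₀ ℕ) : ℕ := d 0 + d 1

lemma deg_eq_sum (d : Fin 2 →₀ ℕ) : d.sum (fun _ k => k) = deg d := by
  rw [Finsupp.sum_fintype _ _ (fun _ => rfl), Fin.sum_univ_two]; rfl

lemma deg_add (u v : Fin 2 →₀ ℕ) : deg (u + v) = deg u + deg v := by
  simp [deg, Finsupp.add_apply]; ring

/-- partial derivative in direction `i` -/
noncomputable def Dop (i : Fin 2) (f : MvPowerSeries (Fin 2) B) : MvPowerSeries (Fin 2) B :=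
  fun d => (d i + 1) • f (d + Finsupp.single i 1)

lemma coeff_D (i : Fin 2) (f : MvPowerSeries (Fin 2) B) (d : Fin 2 →₀ ℕ) :
    coeff d (Dop i f) = (d i + 1) • coeff (d + Finsupp.single i 1) f := rfl

lemma D_add (i : Fin 2) (f g : MvPowerSeries (Fin 2) B) :
    Dop i (f + g) = Dop i f + Dop i g := by
  ext d
  simp [coeff_D, map_add, smul_add]

lemma sum_shift (i : Fin 2) (d : Fin 2 →₀ ℕ) (F : (Fin 2 →₀ ℕ) → (Fin 2 →₀ ℕ) → B) :
    Finset.sum (antidiagonal (d + Finsupp.single i 1))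
        (fun p : (Fin 2 →₀ ℕ) × (Fin 2 →₀ ℕ) => (p.2 i) • F p.1 p.2)
      = Finset.sum (antidiagonal d)
        (fun p : (Fin 2 →₀ ℕ) × (Fin 2 →₀ ℕ) => (p.2 i + 1) • F p.1 (p.2 + Finsupp.single i 1)) := by
  classical
  rw [← Finset.sum_filter_of_ne (p := fun p : (Fin 2 →₀ ℕ) × (Fin 2 →₀ ℕ) => p.2 i ≠ 0)
    (by intro x _ hx; intro h0; exact hx (by rw [h0, zero_smul]))]
  refine Finset.sum_bij' (fun p _ => (p.1, p.2 - Finsupp.single i 1))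
    (fun q _ => (q.1, q.2 + Finsupp.single i 1)) ?_ ?_ ?_ ?_ ?_
  · rintro ⟨u, v⟩ hp
    simp only [mem_filter, HasAntidiagonal.mem_antidiagonal] at hp
    obtain ⟨h1, h2⟩ := hp
    have hle : Finsupp.single i 1 ≤ v := Finsupp.single_le_iff.2 (Nat.one_le_iff_ne_zero.2 h2)
    rw [HasAntidiagonal.mem_antidiagonal]
    have : u + (v - Finsupp.single i 1) + Finsupp.single i 1 = d + Finsupp.single i 1 := by
      rw [add_assoc, tsub_add_cancel_of_le hle, h1]
    exact add_right_cancel this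
  · rintro ⟨u, v⟩ hq
    simp only [HasAntidiagonal.mem_antidiagonal] at hq
    simp only [mem_filter, HasAntidiagonal.mem_antidiagonal]
    constructor
    · rw [← add_assoc, hq]
    · simp [Finsupp.add_apply, Finsupp.single_eq_same]
  · rintro ⟨u, v⟩ hp
    simp only [mem_filter, HasAntidiagonal.mem_antidiagonal] at hp
    have hle : Finsupp.single i 1 ≤ v := Finsupp.single_le_iff.2 (Nat.one_le_iff_ne_zero.2 hp.2)
    simp [tsub_add_cancel_of_le hle]
  · rintro ⟨u, v⟩ _
    simp
  · rintro ⟨u, v⟩ hp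
    simp only [mem_filter, HasAntidiagonal.mem_antidiagonal] at hp
    have hle : Finsupp.single i 1 ≤ v := Finsupp.single_le_iff.2 (Nat.one_le_iff_ne_zero.2 hp.2)
    have hv : ((v - Finsupp.single i 1 : Fin 2 →₀ ℕ)) i + 1 = v i := by
      rw [Finsupp.tsub_apply, Finsupp.single_eq_same]
      exact Nat.succ_pred_eq_of_pos (Nat.pos_of_ne_zero hp.2)
    rw [tsub_add_cancel_of_le hle, hv]

lemma sum_antidiag_swap (d : Fin 2 →₀ ℕ) (F : (Fin 2 →₀ ℕ) → (Fin 2 →₀ ℕ) → B) :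
    Finset.sum (antidiagonal d) (fun p : (Fin 2 →₀ ℕ) × (Fin 2 →₀ ℕ) => F p.1 p.2)
      = Finset.sum (antidiagonal d) (fun p : (Fin 2 →₀ ℕ) × (Fin 2 →₀ ℕ) => F p.2 p.1) := by
  refine Finset.sum_nbij' (fun p => (p.2, p.1)) (fun p => (p.2, p.1)) ?_ ?_ ?_ ?_ ?_ <;>
    simp +contextual [Finset.swap_mem_antidiagonal, add_comm]

lemma D_mul (i : Fin 2) (f g : MvPowerSeries (Fin 2) B) :
    Dop i (f * g) = f * Dop i g + Dop i f * g := by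
  classical
  ext d
  rw [map_add, coeff_D, coeff_mul, coeff_mul, coeff_mul, Finset.smul_sum]
  have step1 : ∀ p ∈ antidiagonal (d + Finsupp.single i 1),
      (d i + 1) • (coeff p.1 f * coeff p.2 g)
        = (fun p : (Fin 2 →₀ ℕ) × (Fin 2 →₀ ℕ) =>
            (p.1 i) • (coeff p.1 f * coeff p.2 g)
          + (p.2 i) • (coeff p.1 f * coeff p.2 g)) p := by
    rintro ⟨u, v⟩ hp
    rw [HasAntidiagonal.mem_antidiagonal] at hp
    have huv : u i + v i = d i + 1 := by
      have := congrArg (fun w : Fin 2 →₀ ℕ => w i) hp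
      simpa [Finsupp.add_apply, Finsupp.single_eq_same] using this
    simp only [← add_smul, huv]
  rw [Finset.sum_congr rfl step1, Finset.sum_add_distrib, add_comm]
  congr 1
  · -- Σ (p.2 i) • (f_{p.1} g_{p.2}) = coeff d (f * Dop i g)
    rw [sum_shift i d (fun u v => coeff u f * coeff v g)]
    refine Finset.sum_congr rfl ?_
    rintro ⟨u, v⟩ _
    rw [coeff_D, mul_smul_comm]
  · -- Σ (p.1 i) • (f_{p.1} g_{p.2}) = coeff d (Dop i f * g)
    rw [sum_antidiag_swap (d + Finsupp.single i 1)
      (fun u v => (u i) • (coeff u f * coeff v g))]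
    rw [sum_antidiag_swap d (fun u v => coeff u (Dop i f) * coeff v g)]
    rw [sum_shift i d (fun u v => coeff v f * coeff u g)]
    refine Finset.sum_congr rfl ?_
    rintro ⟨u, v⟩ _
    rw [coeff_D, smul_mul_assoc]


lemma D_zero (i : Fin 2) : Dop i (0 : MvPowerSeries (Fin 2) B) = 0 := by
  ext d; simp [coeff_D]

lemma D_one (i : Fin 2) : Dop i (1 : MvPowerSeries (Fin 2) B) = 0 := by
  classical
  ext d
  rw [coeff_D, coeff_one, if_neg, smul_zero, map_zero]
  intro h
  have := congrArg (fun w : Fin 2 →₀ ℕ => w i) h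
  simp [Finsupp.add_apply, Finsupp.single_eq_same] at this

lemma D_C (i : Fin 2) (b : B) : Dop i ((C (σ := Fin 2) (R := B)) b) = 0 := by
  classical
  ext d
  rw [coeff_D, coeff_C, if_neg, smul_zero, map_zero]
  intro h
  have := congrArg (fun w : Fin 2 →₀ ℕ => w i) h
  simp [Finsupp.add_apply, Finsupp.single_eq_same] at this

lemma D_X_self (i : Fin 2) : Dop i (X i : MvPowerSeries (Fin 2) B) = 1 := by
  classical
  ext d
  rw [coeff_D, coeff_X, coeff_one]
  by_cases hd : d = 0
  · subst hd
    rw [if_pos (by simp), if_pos rfl]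
    simp
  · rw [if_neg, if_neg hd, smul_zero]
    intro h
    exact hd (add_right_cancel (h.trans (zero_add (Finsupp.single i 1)).symm))

lemma D_X_ne {i j : Fin 2} (hij : j ≠ i) : Dop i (X j : MvPowerSeries (Fin 2) B) = 0 := by
  classical
  ext d
  rw [coeff_D, coeff_X, if_neg, smul_zero, map_zero]
  intro h
  have := congrArg (fun w : Fin 2 →₀ ℕ => w i) h
  simp [Finsupp.add_apply, Finsupp.single_eq_same, Finsupp.single_apply, hij] at this

lemma D_C_mul (i : Fin 2) (b : B) (f : MvPowerSeries (Fin 2) B) :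
    Dop i ((C (σ := Fin 2) (R := B)) b * f) = (C (σ := Fin 2) (R := B)) b * Dop i f := by
  rw [D_mul, D_C, zero_mul, add_zero]

lemma D_pow (i : Fin 2) (h : MvPowerSeries (Fin 2) B) (n : ℕ) :
    Dop i (h ^ (n + 1)) = (n + 1) • (h ^ n * Dop i h) := by
  induction n with
  | zero => simp [D_mul, D_one]
  | succ n ih =>
      have e1 : h ^ (n + 2) = h * h ^ (n + 1) := by ring
      have e2 : h * (h ^ n * Dop i h) = h ^ (n + 1) * Dop i h := by ring
      have e3 : Dop i h * h ^ (n + 1) = h ^ (n + 1) * Dop i h := by ring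
      rw [e1, D_mul, ih, mul_smul_comm, e2, e3, succ_nsmul (h ^ (n + 1) * Dop i h),
        succ_nsmul (h ^ (n + 1) * Dop i h)]
      simp only [succ_nsmul, add_nsmul, one_nsmul, two_nsmul]

lemma D_sum (i : Fin 2) (N : ℕ) (F : ℕ → MvPowerSeries (Fin 2) B) :
    Dop i (∑ n ∈ Finset.range N, F n) = ∑ n ∈ Finset.range N, Dop i (F n) := by
  induction N with
  | zero => simpa using D_zero i
  | succ N ih => rw [Finset.sum_range_succ, Finset.sum_range_succ, D_add, ih]

lemma deg_pos_of_ne_zero {u : Fin 2 →₀ ℕ} (hu : u ≠ 0) : 0 < deg u := by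
  rcases Nat.eq_zero_or_pos (deg u) with h | h
  · exfalso
    apply hu
    have h0 : u 0 = 0 := by unfold deg at h; omega
    have h1 : u 1 = 0 := by unfold deg at h; omega
    ext j
    fin_cases j
    · exact h0
    · exact h1
  · exact h

lemma coeff_pow_eq_zero {h : MvPowerSeries (Fin 2) B} (hh : (constantCoeff (σ := Fin 2) (R := B)) h = 0)
    {n : ℕ} : ∀ d : Fin 2 →₀ ℕ, deg d < n → coeff d (h ^ n) = 0 := by
  classical
  induction n with
  | zero => intro d hd; omega
  | succ n ih =>
      intro d hd
      rw [pow_succ, mul_comm, coeff_mul]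
      refine Finset.sum_eq_zero ?_
      rintro ⟨u, v⟩ hp
      rw [HasAntidiagonal.mem_antidiagonal] at hp
      by_cases hu : u = 0
      · subst hu
        rw [coeff_zero_eq_constantCoeff_apply, hh, zero_mul]
      · have h1 : 0 < deg u := deg_pos_of_ne_zero hu
        have h2 : deg u + deg v = deg d := by rw [← deg_add, hp]
        rw [ih v (by omega), mul_zero]

lemma coeff_pow_mul_eq_zero {h : MvPowerSeries (Fin 2) B}
    (hh : (constantCoeff (σ := Fin 2) (R := B)) h = 0) {n : ℕ} (t : MvPowerSeries (Fin 2) B)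
    {d : Fin 2 →₀ ℕ} (hd : deg d < n) : coeff d (h ^ n * t) = 0 := by
  classical
  rw [coeff_mul]
  refine Finset.sum_eq_zero ?_
  rintro ⟨u, v⟩ hp
  rw [HasAntidiagonal.mem_antidiagonal] at hp
  have h2 : deg u + deg v = deg d := by rw [← deg_add, hp]
  rw [coeff_pow_eq_zero hh u (by omega), zero_mul]

lemma coeff_X_mul_D (i : Fin 2) (f : MvPowerSeries (Fin 2) B) (d : Fin 2 →₀ ℕ) :
    coeff d ((X i : MvPowerSeries (Fin 2) B) * Dop i f) = d i • coeff d f := by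
  classical
  have hX : (X i : MvPowerSeries (Fin 2) B) = monomial (Finsupp.single i 1) 1 := rfl
  rw [hX, coeff_monomial_mul]
  by_cases hdi : d i = 0
  · rw [if_neg, hdi, zero_smul]
    intro hle
    have := Finsupp.single_le_iff.1 hle
    omega
  · have hle : Finsupp.single i 1 ≤ d := Finsupp.single_le_iff.2 (Nat.one_le_iff_ne_zero.2 hdi)
    rw [if_pos hle, one_mul, coeff_D, tsub_add_cancel_of_le hle]
    congr 1
    rw [Finsupp.tsub_apply, Finsupp.single_eq_same]
    omega

lemma coeff_w_D (i : Fin 2) (a : B) (f : MvPowerSeries (Fin 2) B) (d : Fin 2 →₀ ℕ) :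
    coeff d ((1 + (C (σ := Fin 2) (R := B)) a * X i) * Dop i f)
      = (d i + 1) • coeff (d + Finsupp.single i 1) f + d i • (a * coeff d f) := by
  rw [add_mul, one_mul, map_add, coeff_D, mul_assoc, coeff_C_mul, coeff_X_mul_D,
    mul_smul_comm]



section Main
variable [Algebra ℚ B]

/-- the coefficients of `e` -/
noncomputable def cf (y a : B) (n : ℕ) : B :=
  ((n.factorial : ℚ)⁻¹) • ∏ i ∈ Finset.range n, (y - (i : B) * a)

lemma cf_zero (y a : B) : cf y a 0 = 1 := by simp [cf]

lemma cf_succ (y a : B) (n : ℕ) :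
    (n + 1) • cf y a (n + 1) = (y - (n : B) * a) * cf y a n := by
  unfold cf
  rw [Finset.prod_range_succ, ← Nat.cast_smul_eq_nsmul ℚ, smul_smul]
  have h1 : ((n : ℚ) + 1) * ((n + 1).factorial : ℚ)⁻¹ = ((n.factorial : ℚ))⁻¹ := by
    rw [Nat.factorial_succ]
    push_cast
    rw [mul_inv]
    rw [← mul_assoc, mul_inv_cancel₀ (by positivity), one_mul]
  push_cast
  rw [h1, mul_smul_comm, mul_comm]

/-- partial sums of the substituted series -/
noncomputable def H (y a : B) (h : MvPowerSeries (Fin 2) B) (N : ℕ) :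
    MvPowerSeries (Fin 2) B :=
  ∑ n ∈ Finset.range N, (C (σ := Fin 2) (R := B)) (cf y a n) * h ^ n

lemma H_zero (y a : B) (h : MvPowerSeries (Fin 2) B) : H y a h 0 = 0 := by
  simp [H]

lemma H_succ (y a : B) (h : MvPowerSeries (Fin 2) B) (N : ℕ) :
    H y a h (N + 1) = H y a h N + (C (σ := Fin 2) (R := B)) (cf y a N) * h ^ N :=
  Finset.sum_range_succ _ _

lemma H_one (y a : B) (h : MvPowerSeries (Fin 2) B) : H y a h 1 = 1 := by
  rw [H_succ, H_zero, zero_add, cf_zero, map_one, pow_zero, mul_one]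

lemma cast_mul_cf_succ (y a : B) (N : ℕ) :
    ((N : MvPowerSeries (Fin 2) B) + 1) * (C (σ := Fin 2) (R := B)) (cf y a (N + 1))
      = (C (σ := Fin 2) (R := B)) y * (C (σ := Fin 2) (R := B)) (cf y a N)
        - (N : MvPowerSeries (Fin 2) B) * (C (σ := Fin 2) (R := B)) a * (C (σ := Fin 2) (R := B)) (cf y a N) := by
  have h1 : ((N + 1 : ℕ) : B) * cf y a (N + 1) = (y - (N : B) * a) * cf y a N := by
    rw [← nsmul_eq_mul]
    exact_mod_cast cf_succ y a N
  have h2 : ((N : MvPowerSeries (Fin 2) B) + 1) = ((N + 1 : ℕ) : MvPowerSeries (Fin 2) B) := by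
    push_cast; ring
  rw [h2, ← map_natCast ((C (σ := Fin 2) (R := B))) (N + 1), ← map_mul, h1]
  rw [map_mul, map_sub, map_mul, map_natCast]
  ring

lemma keyH (y a : B) (i : Fin 2) (w u h : MvPowerSeries (Fin 2) B)
    (hw : w * Dop i h = u * (1 + (C (σ := Fin 2) (R := B)) a * h)) (N : ℕ) :
    w * Dop i (H y a h (N + 1))
      = u * ((C (σ := Fin 2) (R := B)) y * H y a h N
          + N • ((C (σ := Fin 2) (R := B)) a * (C (σ := Fin 2) (R := B)) (cf y a N) * h ^ N)) := by
  induction N with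
  | zero =>
      rw [H_one, D_one, mul_zero, H_zero, mul_zero, zero_smul, add_zero, mul_zero]
  | succ N ih =>
      have hc := cast_mul_cf_succ y a N
      rw [H_succ y a h (N + 1), D_add, mul_add, ih, D_C_mul, D_pow]
      rw [H_succ y a h N]
      simp only [nsmul_eq_mul]
      push_cast
      linear_combination (exp := 1)
        ((C (σ := Fin 2) (R := B)) (cf y a (N + 1)) * h ^ N * ((N:MvPowerSeries (Fin 2) B) + 1)) * hw
          + (u * h ^ N * (1 + (C (σ := Fin 2) (R := B)) a * h) - u * (C (σ := Fin 2) (R := B)) a * h ^ (N + 1)) * hc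

end Main


section Ser
variable (a : B)

/-- `(1+aX₁)⁻¹` -/
noncomputable def Sinv : MvPowerSeries (Fin 2) B :=
  MvPowerSeries.invOfUnit (1 + (C (σ := Fin 2) (R := B)) a * X 0) 1

lemma hS : (1 + (C (σ := Fin 2) (R := B)) a * X 0) * Sinv a = 1 := by
  refine mul_invOfUnit _ 1 ?_
  simp [constantCoeff_X]

/-- `g = (1+aX₁)⁻¹ (X₂ - X₁)` -/
noncomputable def gg : MvPowerSeries (Fin 2) B :=
  Sinv a * (X 1 - X 0)

lemma cc_g : (constantCoeff (σ := Fin 2) (R := B)) (gg a) = 0 := by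
  unfold gg
  rw [map_mul, map_sub, constantCoeff_X, constantCoeff_X]
  ring

lemma D_sub (i : Fin 2) (f g : MvPowerSeries (Fin 2) B) :
    Dop i (f - g) = Dop i f - Dop i g := by
  ext d
  simp [coeff_D, map_sub, smul_sub]

lemma D1_S : Dop 1 (Sinv a) = 0 := by
  have h0 : Dop 1 ((1 + (C (σ := Fin 2) (R := B)) a * X 0) * Sinv a) = 0 := by
    rw [hS, D_one]
  rw [D_mul] at h0
  have hD : Dop 1 (1 + (C (σ := Fin 2) (R := B)) a * X 0) = 0 := by
    rw [D_add, D_one, D_C_mul, D_X_ne (by decide : (0 : Fin 2) ≠ 1), mul_zero, add_zero]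
  rw [hD, zero_mul, add_zero] at h0
  -- h0 : (1 + C a * X 0) * Dop 1 (Sinv a) = 0
  have := congrArg (fun z => Sinv a * z) h0
  simpa [← mul_assoc, mul_comm (Sinv a) (1 + (C (σ := Fin 2) (R := B)) a * X 0), hS] using this

lemma w0_D0_S : (1 + (C (σ := Fin 2) (R := B)) a * X 0) * Dop 0 (Sinv a) = -((C (σ := Fin 2) (R := B)) a * Sinv a) := by
  have h0 : Dop 0 ((1 + (C (σ := Fin 2) (R := B)) a * X 0) * Sinv a) = 0 := by
    rw [hS, D_one]
  rw [D_mul] at h0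
  have hD : Dop 0 (1 + (C (σ := Fin 2) (R := B)) a * X 0) = (C (σ := Fin 2) (R := B)) a := by
    rw [D_add, D_one, D_C_mul, D_X_self, mul_one, zero_add]
  rw [hD] at h0
  linear_combination h0

lemma w0_D0_g : (1 + (C (σ := Fin 2) (R := B)) a * X 0) * Dop 0 (gg a)
    = (-1) * (1 + (C (σ := Fin 2) (R := B)) a * gg a) := by
  have hDg : Dop 0 (gg a) = Dop 0 (Sinv a) * (X 1 - X 0) + Sinv a * (-1) := by
    unfold gg
    rw [D_mul, D_sub, D_X_ne (by decide : (1 : Fin 2) ≠ 0), D_X_self, zero_sub, mul_neg_one,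
      add_comm]
  rw [hDg]
  have h1 := hS (B := B) a
  have h2 := w0_D0_S (B := B) a
  unfold gg
  linear_combination (-(1 : MvPowerSeries (Fin 2) B)) * h1 + (X 1 - X 0) * h2

lemma w1_D1_g : (1 + (C (σ := Fin 2) (R := B)) a * X 1) * Dop 1 (gg a)
    = 1 * (1 + (C (σ := Fin 2) (R := B)) a * gg a) := by
  have hDg : Dop 1 (gg a) = Dop 1 (Sinv a) * (X 1 - X 0) + Sinv a * 1 := by
    unfold gg
    rw [D_mul, D_sub, D_X_ne (by decide : (0 : Fin 2) ≠ 1), D_X_self, sub_zero, add_comm]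
  rw [hDg]
  have h1 := hS (B := B) a
  have h2 := D1_S (B := B) a
  unfold gg
  linear_combination ((1 + (C (σ := Fin 2) (R := B)) a * X 1) * (X 1 - X 0)) * h2 + h1

lemma w0_D0_X0 : (1 + (C (σ := Fin 2) (R := B)) a * X 0) * Dop 0 (X 0 : MvPowerSeries (Fin 2) B)
    = 1 * (1 + (C (σ := Fin 2) (R := B)) a * X 0) := by
  rw [D_X_self, mul_one, one_mul]

end Ser


section Sub
variable (y a : B) [Algebra ℚ B]

lemma coeff_substPS (f : PowerSeries B) (h : MvPowerSeries (Fin 2) B) (d : Fin 2 →₀ ℕ) :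
    coeff d (substPS f h)
      = ∑ n ∈ Finset.range (deg d + 1), PowerSeries.coeff n f * coeff d (h ^ n) := by
  rw [coeff_apply]
  show (∑ n ∈ Finset.range (d.sum (fun _ k => k) + 1),
    PowerSeries.coeff n f * coeff d (h ^ n)) = _
  rw [deg_eq_sum]

lemma eSer_coeff (n : ℕ) : PowerSeries.coeff n (eSer y a) = cf y a n := by
  rw [eSer, PowerSeries.coeff_mk]; rfl

lemma coeff_H (h : MvPowerSeries (Fin 2) B) (d : Fin 2 →₀ ℕ) (N : ℕ) :
    coeff d (H y a h N) = ∑ n ∈ Finset.range N, cf y a n * coeff d (h ^ n) := by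
  rw [H, map_sum]
  exact Finset.sum_congr rfl fun n _ => coeff_C_mul _ _ _

lemma coeff_substPS_eq_coeff_H (h : MvPowerSeries (Fin 2) B)
    (hh : (constantCoeff (σ := Fin 2) (R := B)) h = 0) (d : Fin 2 →₀ ℕ) (N : ℕ) (hdN : deg d < N) :
    coeff d (substPS (eSer y a) h) = coeff d (H y a h N) := by
  rw [coeff_substPS, coeff_H]
  simp only [eSer_coeff]
  refine Finset.sum_subset (Finset.range_subset_range.2 (by omega)) ?_
  intro x hx hnx
  rw [Finset.mem_range] at hx hnx
  rw [coeff_pow_eq_zero hh d (by omega), mul_zero]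

lemma coeff_mul_eq (h1 h2 : MvPowerSeries (Fin 2) B)
    (hh1 : (constantCoeff (σ := Fin 2) (R := B)) h1 = 0) (hh2 : (constantCoeff (σ := Fin 2) (R := B)) h2 = 0)
    (d : Fin 2 →₀ ℕ) (N : ℕ) (hdN : deg d < N) :
    coeff d (substPS (eSer y a) h1 * substPS (eSer y a) h2)
      = coeff d (H y a h1 N * H y a h2 N) := by
  classical
  rw [coeff_mul, coeff_mul]
  refine Finset.sum_congr rfl ?_
  rintro ⟨u, v⟩ hp
  rw [HasAntidiagonal.mem_antidiagonal] at hp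
  have hdeg : deg u + deg v = deg d := by rw [← deg_add, hp]
  rw [coeff_substPS_eq_coeff_H y a h1 hh1 u N (by omega),
    coeff_substPS_eq_coeff_H y a h2 hh2 v N (by omega)]

lemma D1_HX0 (M : ℕ) : Dop 1 (H y a (X 0 : MvPowerSeries (Fin 2) B) M) = 0 := by
  rw [H, D_sum]
  refine Finset.sum_eq_zero fun n _ => ?_
  rw [D_C_mul]
  rcases n with _ | n
  · rw [pow_zero, D_one, mul_zero]
  · rw [D_pow, D_X_ne (by decide : (0 : Fin 2) ≠ 1), mul_zero, smul_zero, mul_zero]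

lemma recF0_ring (N : ℕ) :
    ∃ t1 t2 : MvPowerSeries (Fin 2) B,
      (1 + (C (σ := Fin 2) (R := B)) a * X 0)
          * Dop 0 (H y a (X 0) (N + 1) * H y a (gg a) (N + 1))
        = (X 0 : MvPowerSeries (Fin 2) B) ^ N * t1 + (gg a) ^ N * t2 := by
  have kA := keyH y a 0 (1 + (C (σ := Fin 2) (R := B)) a * X 0) 1 (X 0) (w0_D0_X0 a) N
  have kE := keyH y a 0 (1 + (C (σ := Fin 2) (R := B)) a * X 0) (-1) (gg a) (w0_D0_g a) N
  have hA1 := H_succ y a (X 0 : MvPowerSeries (Fin 2) B) N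
  have hE1 := H_succ y a (gg a) N
  refine ⟨N • ((C (σ := Fin 2) (R := B)) a * (C (σ := Fin 2) (R := B)) (cf y a N) * H y a (gg a) (N + 1))
      - (C (σ := Fin 2) (R := B)) y * (C (σ := Fin 2) (R := B)) (cf y a N) * H y a (gg a) N,
    (C (σ := Fin 2) (R := B)) y * (C (σ := Fin 2) (R := B)) (cf y a N) * H y a (X 0) N
      - N • ((C (σ := Fin 2) (R := B)) a * (C (σ := Fin 2) (R := B)) (cf y a N) * H y a (X 0) (N + 1)), ?_⟩
  rw [D_mul]
  simp only [nsmul_eq_mul] at kA kE ⊢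
  linear_combination (H y a (X 0 : MvPowerSeries (Fin 2) B) (N + 1)) * kE
    + (H y a (gg a) (N + 1)) * kA
    + (-((C (σ := Fin 2) (R := B)) y * H y a (gg a) N)) * hA1
    + ((C (σ := Fin 2) (R := B)) y * H y a (X 0 : MvPowerSeries (Fin 2) B) N) * hE1

lemma recF1_ring (N : ℕ) :
    ∃ t1 t2 : MvPowerSeries (Fin 2) B,
      (1 + (C (σ := Fin 2) (R := B)) a * X 1)
          * Dop 1 (H y a (X 0) (N + 1) * H y a (gg a) (N + 1))
        = (C (σ := Fin 2) (R := B)) y * (H y a (X 0) N * H y a (gg a) N)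
          + (X 0 : MvPowerSeries (Fin 2) B) ^ N * t1 + (gg a) ^ N * t2 := by
  have kE := keyH y a 1 (1 + (C (σ := Fin 2) (R := B)) a * X 1) 1 (gg a) (w1_D1_g a) N
  have hA1 := H_succ y a (X 0 : MvPowerSeries (Fin 2) B) N
  refine ⟨(C (σ := Fin 2) (R := B)) y * (C (σ := Fin 2) (R := B)) (cf y a N) * H y a (gg a) N,
    N • ((C (σ := Fin 2) (R := B)) a * (C (σ := Fin 2) (R := B)) (cf y a N) * H y a (X 0) (N + 1)), ?_⟩
  rw [D_mul, D1_HX0, zero_mul, add_zero]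
  simp only [nsmul_eq_mul] at kE ⊢
  linear_combination (H y a (X 0 : MvPowerSeries (Fin 2) B) (N + 1)) * kE
    + ((C (σ := Fin 2) (R := B)) y * H y a (gg a) N) * hA1

lemma deg_single0 : deg (Finsupp.single (0 : Fin 2) 1) = 1 := by
  simp [deg, Finsupp.single_apply]

lemma deg_single1 : deg (Finsupp.single (1 : Fin 2) 1) = 1 := by
  simp [deg, Finsupp.single_apply]

/-- the left-hand side, as an honest power series -/
noncomputable def Ftrue : MvPowerSeries (Fin 2) B :=
  substPS (eSer y a) (X 0) * substPS (eSer y a) (gg a)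

lemma recF0' (d : Fin 2 →₀ ℕ) :
    (d 0 + 1) • coeff (d + Finsupp.single 0 1) (Ftrue y a)
      + d 0 • (a * coeff d (Ftrue y a)) = 0 := by
  obtain ⟨t1, t2, hrec⟩ := recF0_ring y a (deg d + 1)
  have h1 := congrArg (coeff d) hrec
  rw [coeff_w_D, map_add,
    coeff_pow_mul_eq_zero (constantCoeff_X 0) t1 (by omega),
    coeff_pow_mul_eq_zero (cc_g a) t2 (by omega), add_zero] at h1
  have e1 : coeff (d + Finsupp.single 0 1)
      (H y a (X 0) (deg d + 1 + 1) * H y a (gg a) (deg d + 1 + 1))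
        = coeff (d + Finsupp.single 0 1) (Ftrue y a) := by
    unfold Ftrue
    exact (coeff_mul_eq y a (X 0) (gg a) (constantCoeff_X 0) (cc_g a)
      (d + Finsupp.single 0 1) (deg d + 1 + 1)
      (by rw [deg_add, deg_single0]; omega)).symm
  have e2 : coeff d (H y a (X 0) (deg d + 1 + 1) * H y a (gg a) (deg d + 1 + 1))
        = coeff d (Ftrue y a) := by
    unfold Ftrue
    exact (coeff_mul_eq y a (X 0) (gg a) (constantCoeff_X 0) (cc_g a)
      d (deg d + 1 + 1) (by omega)).symm
  rw [e1, e2] at h1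
  exact h1

lemma recF1' (d : Fin 2 →₀ ℕ) :
    (d 1 + 1) • coeff (d + Finsupp.single 1 1) (Ftrue y a)
      + d 1 • (a * coeff d (Ftrue y a)) = y * coeff d (Ftrue y a) := by
  obtain ⟨t1, t2, hrec⟩ := recF1_ring y a (deg d + 1)
  have h1 := congrArg (coeff d) hrec
  rw [coeff_w_D, map_add, map_add, coeff_C_mul,
    coeff_pow_mul_eq_zero (constantCoeff_X 0) t1 (by omega),
    coeff_pow_mul_eq_zero (cc_g a) t2 (by omega), add_zero, add_zero] at h1
  have e1 : coeff (d + Finsupp.single 1 1)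
      (H y a (X 0) (deg d + 1 + 1) * H y a (gg a) (deg d + 1 + 1))
        = coeff (d + Finsupp.single 1 1) (Ftrue y a) := by
    unfold Ftrue
    exact (coeff_mul_eq y a (X 0) (gg a) (constantCoeff_X 0) (cc_g a)
      (d + Finsupp.single 1 1) (deg d + 1 + 1)
      (by rw [deg_add, deg_single1]; omega)).symm
  have e2 : coeff d (H y a (X 0) (deg d + 1) * H y a (gg a) (deg d + 1))
        = coeff d (Ftrue y a) := by
    unfold Ftrue
    exact (coeff_mul_eq y a (X 0) (gg a) (constantCoeff_X 0) (cc_g a)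
      d (deg d + 1) (by omega)).symm
  have e3 : coeff d (H y a (X 0) (deg d + 1 + 1) * H y a (gg a) (deg d + 1 + 1))
        = coeff d (Ftrue y a) := by
    unfold Ftrue
    exact (coeff_mul_eq y a (X 0) (gg a) (constantCoeff_X 0) (cc_g a)
      d (deg d + 1 + 1) (by omega)).symm
  rw [e1, e2, e3] at h1
  exact h1

end Sub

section Fin2
variable (y a : B) [Algebra ℚ B]

lemma coeff_G (d : Fin 2 →₀ ℕ) :
    coeff d (substPS (eSer y a) (X 1)) = if d 0 = 0 then cf y a (d 1) else 0 := by
  classical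
  rw [coeff_substPS]
  simp only [eSer_coeff, coeff_X_pow]
  by_cases h0 : d 0 = 0
  · rw [if_pos h0]
    have hd : d = Finsupp.single 1 (d 1) := by
      ext j; fin_cases j
      · simpa [Finsupp.single_apply] using h0
      · simp
    have hcond : ∀ n ∈ Finset.range (deg d + 1),
        cf y a n * (if d = Finsupp.single 1 n then 1 else 0)
          = if n = d 1 then cf y a n else 0 := by
      intro n _
      by_cases hn : n = d 1
      · rw [if_pos hn, if_pos (by rw [hn, ← hd]), mul_one]
      · rw [if_neg hn, if_neg, mul_zero]
        intro h
        exact hn (Finsupp.single_injective 1 (hd.symm.trans h)).symm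
    rw [Finset.sum_congr rfl hcond,
      Finset.sum_ite_eq' (Finset.range (deg d + 1)) (d 1) (cf y a)]
    rw [if_pos (Finset.mem_range.2 (by unfold deg; omega))]
  · rw [if_neg h0]
    refine Finset.sum_eq_zero fun n _ => ?_
    rw [if_neg, mul_zero]
    intro h
    apply h0
    rw [h]
    simp [Finsupp.single_apply]

lemma F_base : coeff 0 (Ftrue y a) = 1 := by
  have h := coeff_mul_eq y a (X 0) (gg a) (constantCoeff_X 0) (cc_g a) 0 1
    (by simp [deg])
  unfold Ftrue
  rw [h, H_one, H_one, mul_one, coeff_zero_one]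

lemma nsmul_cancel {x z : B} (n : ℕ) (h : (n + 1) • x = (n + 1) • z) : x = z := by
  rw [← Nat.cast_smul_eq_nsmul ℚ, ← Nat.cast_smul_eq_nsmul ℚ] at h
  have hq : (((n : ℕ) + 1 : ℕ) : ℚ) ≠ 0 := by exact_mod_cast Nat.succ_ne_zero n
  calc x = ((((n : ℕ) + 1 : ℕ) : ℚ))⁻¹ • ((((n : ℕ) + 1 : ℕ) : ℚ) • x) :=
        (inv_smul_smul₀ hq x).symm
    _ = ((((n : ℕ) + 1 : ℕ) : ℚ))⁻¹ • ((((n : ℕ) + 1 : ℕ) : ℚ) • z) := by rw [h]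
    _ = z := inv_smul_smul₀ hq z

/-- the exponent `(m, k)` -/
noncomputable def dd (m k : ℕ) : Fin 2 →₀ ℕ := Finsupp.single 0 m + Finsupp.single 1 k

lemma dd_apply0 (m k : ℕ) : (dd m k) 0 = m := by
  simp [dd, Finsupp.single_apply]

lemma dd_apply1 (m k : ℕ) : (dd m k) 1 = k := by
  simp [dd, Finsupp.single_apply]

lemma dd_repr (d : Fin 2 →₀ ℕ) : d = dd (d 0) (d 1) := by
  ext j; fin_cases j <;> simp [dd, Finsupp.single_apply]

lemma dd_add0 (m k : ℕ) : dd m k + Finsupp.single 0 1 = dd (m + 1) k := by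
  ext j; fin_cases j <;> simp [dd, Finsupp.single_apply]

lemma dd_add1 (m k : ℕ) : dd m k + Finsupp.single 1 1 = dd m (k + 1) := by
  ext j; fin_cases j <;> simp [dd, Finsupp.single_apply]

lemma dd_zero : dd 0 0 = 0 := by
  ext j; fin_cases j <;> simp [dd, Finsupp.single_apply]

lemma key (m k : ℕ) :
    coeff (dd m k) (Ftrue y a) = coeff (dd m k) (substPS (eSer y a) (X 1)) := by
  induction m generalizing k with
  | zero =>
      induction k with
      | zero =>
          rw [dd_zero, F_base, coeff_G]
          simp [cf_zero]
      | succ k ih =>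
          have hGk : coeff (dd 0 k) (substPS (eSer y a) (X 1)) = cf y a k := by
            rw [coeff_G, dd_apply0, dd_apply1, if_pos rfl]
          have hGk1 : coeff (dd 0 (k + 1)) (substPS (eSer y a) (X 1)) = cf y a (k + 1) := by
            rw [coeff_G, dd_apply0, dd_apply1, if_pos rfl]
          have hr := recF1' y a (dd 0 k)
          rw [dd_apply1, dd_add1, ih, hGk] at hr
          have target : (k + 1) • coeff (dd 0 (k + 1)) (Ftrue y a)
              = (k + 1) • cf y a (k + 1) := by
            rw [cf_succ]
            simp only [nsmul_eq_mul] at hr ⊢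
            linear_combination hr
          rw [hGk1]
          exact nsmul_cancel k target
  | succ m ih =>
      have hG1 : coeff (dd (m + 1) k) (substPS (eSer y a) (X 1)) = 0 := by
        rw [coeff_G, dd_apply0, if_neg (Nat.succ_ne_zero m)]
      have hr := recF0' y a (dd m k)
      rw [dd_apply0, dd_add0] at hr
      have h2 : m • (a * coeff (dd m k) (Ftrue y a)) = 0 := by
        rcases m with _ | m'
        · rw [zero_smul]
        · rw [ih k, coeff_G, dd_apply0, if_neg (Nat.succ_ne_zero m'), mul_zero, smul_zero]
      rw [h2, add_zero] at hr
      rw [hG1]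
      exact nsmul_cancel m (by rw [hr, smul_zero])

end Fin2

end S3proof

/-- the formal cocycle identity `e(X₁) · (e ∘ g) = e(X₂)` in `B[[X₁,X₂]]`, where
`g = (1+a·X₁)⁻¹·(X₂ − X₁)`. -/
theorem statement3 {B : Type*} [CommRing B] [Algebra ℚ B] (y a : B) :
    substPS (eSer y a) (MvPowerSeries.X 0) *
        substPS (eSer y a)
          ((MvPowerSeries.invOfUnit (1 + (MvPowerSeries.C (σ := Fin 2) (R := B)) a * MvPowerSeries.X 0) 1) *
            (MvPowerSeries.X 1 - MvPowerSeries.X 0)) =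
      substPS (eSer y a) (MvPowerSeries.X 1) := by
  show S3proof.Ftrue y a = substPS (eSer y a) (MvPowerSeries.X 1)
  apply MvPowerSeries.ext
  intro d
  have h := S3proof.key y a (d 0) (d 1)
  rwa [← S3proof.dd_repr d] at h
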